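/- For every string S ∈ Σ^n \ H_{n,k}, the set f_c(S) has size at least (γk/(3n))·|P(S)|. -/

import Mathlib

open Finset
open scoped Classical

noncomputable section

variable {α : Type*}

/-- `i ↻ n`: 1-indexed wrap-around of an (integer) position. -/
def zwrap (n : ℕ) (i : ℤ) : ℕ := ((i - 1) % (n : ℤ)).toNat + 1

/-- `S*[i]`: the infinite cyclic extension of the length-`n` string `S` (1-indexed). -/
def cext (n : ℕ) (S : ℕ → α) (i : ℕ) : α := S ((i - 1) % n + 1)

/-- The fragment `S*[a..]`, i.e. the string `w` with `w[j] = S*[a+j-1]`. -/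
def frag (n : ℕ) (S : ℕ → α) (a : ℕ) : ℕ → α := fun j => cext n S (a + j - 1)

/-- Hamming distance restricted to positions `[a..b]` (1-indexed strings). -/
def hamIcc (a b : ℕ) (S T : ℕ → α) : ℕ := ((Finset.Icc a b).filter fun j => S j ≠ T j).card

/-- Hamming distance between two length-`n` strings. -/
def ham (n : ℕ) (S T : ℕ → α) : ℕ := hamIcc 1 n S T

/-- `p` is a period of the length-`L` string `w` (1-indexed). -/
def IsPeriod (L : ℕ) (w : ℕ → α) (p : ℕ) : Prop :=
  1 ≤ p ∧ ∀ j, 1 ≤ j → j + p ≤ L → w j = w (j + p)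

/-- `per(w)`: the shortest period of the length-`L` string `w`. -/
def per (L : ℕ) (w : ℕ → α) : ℕ := sInf {p | IsPeriod L w p}

/-- `root(S)`: the length of the primitive root of the length-`n` string `S`,
i.e. the least length of a string `Q` with `S = Q^α`. -/
def root (n : ℕ) (S : ℕ → α) : ℕ := sInf {r | r ∣ n ∧ IsPeriod n S r}

/-- `S` is `(a,b)`-pseudo-periodic: it has an `(a,b)`-base. -/
def PseudoPeriodic (n : ℕ) (a b : ℝ) (S : ℕ → α) : Prop :=
  ∃ S' : ℕ → α, (root n S' : ℝ) ≤ (n : ℝ) / a ∧ (ham n S S' : ℝ) ≤ b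

/-- `cyc(S)`: left cyclic rotation, `cyc(S)[i] = S*[i+1]`. -/
def cyc (n : ℕ) (S : ℕ → α) : ℕ → α := fun i => cext n S (i + 1)

/-- `cyc^m(S)` for an integer `m`: `cyc^m(S)[i] = S*[i+m]` (cyclically). -/
def cycZ (n : ℕ) (m : ℤ) (S : ℕ → α) : ℕ → α := fun i => S (zwrap n ((i : ℤ) + m))

/-- `rot_n(P) = {(i-1) ↻ n : i ∈ P}`. -/
def rotSet (n : ℕ) (P : Finset ℕ) : Finset ℕ := P.image fun i => zwrap n ((i : ℤ) - 1)

/-- `ρ_{S,i} = per(S*[i..i+3ℓ-1])`. -/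
def rho (n ℓ : ℕ) (S : ℕ → α) (i : ℕ) : ℕ := per (3 * ℓ) (frag n S i)

/-- `μ_{S,i}*`: the infinite periodic extension of `μ_{S,i} = S*[i..i+ρ_{S,i}-1]` (1-indexed). -/
def muExt (n ℓ : ℕ) (S : ℕ → α) (i : ℕ) : ℕ → α :=
  fun j => cext n S (i + (j - 1) % rho n ℓ S i)

/-- `P(S)`: the set of cubic positions of `S`. -/
def cubicSet (n ℓ : ℕ) (S : ℕ → α) : Finset ℕ :=
  (Finset.Icc 1 n).filter fun i => rho n ℓ S i ≤ ℓ

/-- The defining set of `τ_{S,i}`: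
`{τ ≥ 1 : τ < (n/(γk))·Ham(S*[i..i+τ-1], μ_{S,i}*[1..τ])}`. -/
def tauSet (n ℓ k : ℕ) (γ : ℝ) (S : ℕ → α) (i : ℕ) : Set ℕ :=
  {τ | 1 ≤ τ ∧ (τ : ℝ) < (n : ℝ) / (γ * k) * (hamIcc 1 τ (frag n S i) (muExt n ℓ S i) : ℝ)}

/-- `τ_{S,i}`. -/
def tau (n ℓ k : ℕ) (γ : ℝ) (S : ℕ → α) (i : ℕ) : ℕ := sInf (tauSet n ℓ k γ S i)

/-- `R_{S,i} = [i..i+τ_{S,i}-1]`. -/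
def Rset (n ℓ k : ℕ) (γ : ℝ) (S : ℕ → α) (i : ℕ) : Finset ℕ :=
  Finset.Icc i (i + tau n ℓ k γ S i - 1)

/-- `M_{S,i} = {j ∈ R_{S,i} : S*[j] ≠ μ_{S,i}*[j-i+1]}`. -/
def Mset (n ℓ k : ℕ) (γ : ℝ) (S : ℕ → α) (i : ℕ) : Finset ℕ :=
  (Rset n ℓ k γ S i).filter fun j => cext n S j ≠ muExt n ℓ S i (j - i + 1)

/-- `A_{S,i} = {j ∈ R_{S,i} : [j..j+2ℓ-1] ⊆ R_{S,i} \ M_{S,i}}`. -/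
def Aset (n ℓ k : ℕ) (γ : ℝ) (S : ℕ → α) (i : ℕ) : Finset ℕ :=
  (Rset n ℓ k γ S i).filter fun j =>
    Finset.Icc j (j + 2 * ℓ - 1) ⊆ Rset n ℓ k γ S i \ Mset n ℓ k γ S i

/-- `f_c(S) = ∪_{i ∈ P(S)} {j ↻ n : j ∈ M_{S,i}}`. -/
def fc (n ℓ k : ℕ) (γ : ℝ) (S : ℕ → α) : Finset ℕ :=
  (cubicSet n ℓ S).biUnion fun i => (Mset n ℓ k γ S i).image fun j => zwrap n (j : ℤ)

-- card of a residue class in range ρ, when g ∣ ρ, r < g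
lemma card_class (g ρ' r : ℕ) (hg : 1 ≤ g) (hr : r < g) :
    ((Finset.range (g * ρ')).filter fun y => y % g = r).card = ρ' := by
  have h : ((Finset.range (g * ρ')).filter fun y => y % g = r).card
      = (Finset.range ρ').card := by
    apply Finset.card_nbij' (i := fun y => y / g) (j := fun m => m * g + r)
    · intro y hy
      simp only [Finset.mem_coe, Finset.mem_filter, Finset.mem_range] at hy ⊢
      exact Nat.div_lt_of_lt_mul (by omega)
    · intro m hm
      simp only [Finset.mem_coe, Finset.mem_range] at hm
      refine Finset.mem_filter.mpr ⟨Finset.mem_range.mpr ?_, ?_⟩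
      · calc m * g + r < m * g + g := by omega
          _ = (m + 1) * g := by ring
          _ ≤ ρ' * g := Nat.mul_le_mul_right g (by omega)
          _ = g * ρ' := Nat.mul_comm _ _
      · show (m * g + r) % g = r
        rw [Nat.mul_comm m g, Nat.mul_add_mod, Nat.mod_eq_of_lt hr]
    · intro y hy
      simp only [Finset.mem_coe, Finset.mem_filter, Finset.mem_range] at hy
      show y / g * g + r = y
      calc y / g * g + r = g * (y / g) + y % g := by rw [Nat.mul_comm, hy.2]
        _ = y := Nat.div_add_mod y g
    · intro m hm
      show (m * g + r) / g = m
      rw [Nat.mul_comm m g, Nat.mul_add_div (by omega), Nat.div_eq_of_lt hr]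
      omega
  simpa using h

-- fiber bound: solutions q < ρ to (x + q*n) % ρ = y number at most gcd n ρ
lemma fiber_bound (n ρ x y : ℕ) (hn : 1 ≤ n) (hρ : 1 ≤ ρ) :
    ((Finset.range ρ).filter fun q => (x + q * n) % ρ = y).card ≤ Nat.gcd n ρ := by
  classical
  set g := Nat.gcd n ρ with hgdef
  have hg : 1 ≤ g := Nat.gcd_pos_of_pos_left ρ hn
  set ρ' := ρ / g with hρ'def
  have hρρ' : ρ = g * ρ' := (Nat.mul_div_cancel' (Nat.gcd_dvd_right n ρ)).symm
  set n' := n / g with hn'def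
  have hnn' : n = g * n' := (Nat.mul_div_cancel' (Nat.gcd_dvd_left n ρ)).symm
  have hρ'pos : 1 ≤ ρ' := by
    rcases Nat.eq_zero_or_pos ρ' with h | h
    · rw [h, Nat.mul_zero] at hρρ'; omega
    · exact h
  have cop : Nat.Coprime n' ρ' := Nat.coprime_div_gcd_div_gcd (by omega)
  set s := (Finset.range ρ).filter fun q => (x + q * n) % ρ = y with hs
  rcases s.eq_empty_or_nonempty with h | hne
  · simp [h]
  set q₀ := s.min' hne with hq₀
  have hq₀mem : q₀ ∈ s := s.min'_mem hne
  have hdvd : ∀ q ∈ s, ρ' ∣ q - q₀ := by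
    intro q hq
    have hle : q₀ ≤ q := s.min'_le q hq
    simp only [hs, Finset.mem_filter, Finset.mem_range] at hq hq₀mem
    have hmod : (x + q₀ * n) % ρ = (x + q * n) % ρ := by rw [hq₀mem.2, hq.2]
    have h1 : ρ ∣ (x + q * n) - (x + q₀ * n) :=
      (Nat.modEq_iff_dvd' (by nlinarith)).mp hmod
    have h2 : (x + q * n) - (x + q₀ * n) = (q - q₀) * n := by
      rw [Nat.sub_mul]; omega
    rw [h2, hnn'] at h1
    have h3 : g * ρ' ∣ g * ((q - q₀) * n') := by
      rw [← hρρ'] at *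
      calc ρ ∣ (q - q₀) * (g * n') := h1
        _ = g * ((q - q₀) * n') := by ring
    have h4 : ρ' ∣ (q - q₀) * n' := (Nat.mul_dvd_mul_iff_left (by omega : 0 < g)).mp h3
    exact (Nat.Coprime.dvd_of_dvd_mul_right cop.symm h4)
  have hcard : s.card ≤ (Finset.range g).card := by
    apply Finset.card_le_card_of_injOn (fun q => (q - q₀) / ρ')
    · intro q hq
      simp only [Finset.mem_coe, Finset.mem_range]
      have hqρ : q < ρ := by
        have := hq; simp only [Finset.mem_coe, hs, Finset.mem_filter, Finset.mem_range] at this; exact this.1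
      apply Nat.div_lt_of_lt_mul
      calc q - q₀ ≤ q := Nat.sub_le _ _
        _ < ρ := hqρ
        _ = ρ' * g := by rw [hρρ']; ring
    · intro q hq q' hq' heq
      dsimp only at heq
      have h1 := hdvd q hq
      have h2 := hdvd q' hq'
      have e1 : q - q₀ = ρ' * ((q - q₀) / ρ') := (Nat.mul_div_cancel' h1).symm
      have e2 : q' - q₀ = ρ' * ((q' - q₀) / ρ') := (Nat.mul_div_cancel' h2).symm
      have hle : q₀ ≤ q := s.min'_le q hq
      have hle' : q₀ ≤ q' := s.min'_le q' hq'
      rw [heq] at e1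
      omega
  simpa using hcard

lemma zwrap_natCast (n j : ℕ) (hj : 1 ≤ j) :
    zwrap n (j : ℤ) = (j - 1) % n + 1 := by
  unfold zwrap
  have h1 : ((j : ℤ) - 1) = ((j - 1 : ℕ) : ℤ) := by omega
  rw [h1, ← Int.natCast_mod, Int.toNat_natCast]

-- fiber bound for zwrap on an interval of length L starting at a ≥ 1
lemma zwrap_fiber_le (n a L x : ℕ) (ha : 1 ≤ a) :
    (((Finset.Icc a (a + L - 1)).filter fun j : ℕ => zwrap n (j : ℤ) = x).card) ≤ (L - 1) / n + 1 := by
  by_cases hn : n = 0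
  · subst hn
    -- n = 0 case; zwrap 0 j = j for j ≥ 1? (j-1) % 0 = j-1, so zwrap = j.
    have : ((Finset.Icc a (a + L - 1)).filter fun j : ℕ => zwrap 0 (j : ℤ) = x).card ≤ 1 := by
      apply Finset.card_le_one.mpr
      intro j hj j' hj'
      simp only [Finset.mem_filter, Finset.mem_Icc] at hj hj'
      have e1 := hj.2; have e2 := hj'.2
      rw [zwrap_natCast 0 j (by omega)] at e1
      rw [zwrap_natCast 0 j' (by omega)] at e2
      simp [Nat.mod_zero] at e1 e2
      omega
    omega
  have hn1 : 1 ≤ n := Nat.one_le_iff_ne_zero.mpr hn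
  classical
  set s := (Finset.Icc a (a + L - 1)).filter fun j : ℕ => zwrap n (j : ℤ) = x with hs
  have hinj : Set.InjOn (fun j => (j - a) / n) s := by
    intro j hj j' hj'
    simp only [hs, Finset.coe_filter, Set.mem_setOf_eq, Finset.mem_Icc] at hj hj'
    intro hdiv
    dsimp only at hdiv
    obtain ⟨⟨hja, hjb⟩, hjw⟩ := hj
    obtain ⟨⟨hja', hjb'⟩, hjw'⟩ := hj'
    rw [zwrap_natCast n j (by omega)] at hjw
    rw [zwrap_natCast n j' (by omega)] at hjw'
    have hmod : (j - 1) % n = (j' - 1) % n := by omega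
    -- n ∣ difference
    rcases Nat.lt_trichotomy j j' with h | h | h
    · exfalso
      have hdvd : n ∣ (j' - 1) - (j - 1) := (Nat.modEq_iff_dvd' (by omega)).mp hmod
      have hge : j - a + n ≤ j' - a := by
        have := Nat.le_of_dvd (by omega) hdvd; omega
      have : (j - a) / n < (j' - a) / n := by
        calc (j - a) / n < (j - a) / n + 1 := Nat.lt_succ_self _
        _ = (j - a + n) / n := (Nat.add_div_right _ hn1).symm
        _ ≤ (j' - a) / n := Nat.div_le_div_right hge
      omega
    · exact h
    · exfalso
      have hdvd : n ∣ (j - 1) - (j' - 1) := (Nat.modEq_iff_dvd' (by omega)).mp hmod.symm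
      have hge : j' - a + n ≤ j - a := by
        have := Nat.le_of_dvd (by omega) hdvd; omega
      have : (j' - a) / n < (j - a) / n := by
        calc (j' - a) / n < (j' - a) / n + 1 := Nat.lt_succ_self _
        _ = (j' - a + n) / n := (Nat.add_div_right _ hn1).symm
        _ ≤ (j - a) / n := Nat.div_le_div_right hge
      omega
  have hmaps : ∀ j ∈ s, (j - a) / n ∈ Finset.range ((L - 1) / n + 1) := by
    intro j hj
    simp only [hs, Finset.mem_filter, Finset.mem_Icc] at hj
    simp only [Finset.mem_range]
    have : j - a ≤ L - 1 := by omega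
    have h1 : (j - a) / n ≤ (L - 1) / n := Nat.div_le_div_right this
    omega
  calc s.card ≤ (Finset.range ((L - 1) / n + 1)).card :=
        Finset.card_le_card_of_injOn _ hmaps hinj
    _ = (L - 1) / n + 1 := by simp

lemma one_le_per (L : ℕ) (hL : 1 ≤ L) (w : ℕ → α) : 1 ≤ per L w ∧ IsPeriod L w (per L w) := by
  have hmem : L ∈ {p | IsPeriod L w p} := by
    refine ⟨hL, fun j hj hjL => ?_⟩
    omega
  have := Nat.sInf_mem (⟨L, hmem⟩ : Set.Nonempty _)
  exact ⟨this.1, this⟩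

lemma rho_pos (n ℓ : ℕ) (hℓ : 1 ≤ ℓ) (S : ℕ → α) (i : ℕ) : 1 ≤ rho n ℓ S i :=
  (one_le_per (3*ℓ) (by omega) _).1

lemma modshift (m c x : ℕ) (hm : 1 ≤ m) : (c + x + (m - c % m)) % m = x % m := by
  have h1 : c % m < m := Nat.mod_lt _ (by omega)
  have h2 := Nat.div_add_mod c m
  have h3' : m * (c / m + 1) = m * (c / m) + m := by ring
  have h4 : c + x + (m - c % m) = x + m * (c / m + 1) := by omega
  rw [h4, Nat.add_mul_mod_self_left]

set_option maxHeartbeats 1600000 in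
lemma tauSet_nonempty (n k ℓ : ℕ) (γ : ℝ) (S : ℕ → α)
    (hk1 : 1 ≤ k) (hγ : 14 ≤ γ) (hℓ1 : 1 ≤ ℓ) (hn : (n : ℝ) = 3 * γ * k * ℓ)
    (hS : ¬ PseudoPeriodic n (3 * γ * k) (γ * k) S)
    (i : ℕ) (hi1 : 1 ≤ i) (hρℓ : rho n ℓ S i ≤ ℓ) :
    (tauSet n ℓ k γ S i).Nonempty := by
  by_contra hne
  have hγ0 : (0:ℝ) < γ := by linarith
  have hk0 : (0:ℝ) < (k:ℝ) := by exact_mod_cast hk1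
  have hγk : (0:ℝ) < γ * k := mul_pos hγ0 hk0
  have hℓn : ℓ ≤ n := by
    have h : (ℓ:ℝ) ≤ (n:ℝ) := by
      rw [hn]
      have hℓ0 : (0:ℝ) ≤ (ℓ:ℝ) := Nat.cast_nonneg _
      have hk1' : (1:ℝ) ≤ (k:ℝ) := by exact_mod_cast hk1
      have h41 : (1:ℝ) ≤ 3 * γ * k := by nlinarith
      have h42 := mul_le_mul_of_nonneg_right h41 hℓ0
      linarith
    exact_mod_cast h
  have hn1 : 1 ≤ n := le_trans hℓ1 hℓn
  set ρ := rho n ℓ S i with hρdef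
  have hρ1 : 1 ≤ ρ := rho_pos n ℓ hℓ1 S i
  have hρn : ρ ≤ n := le_trans hρℓ hℓn
  set c := i - 1 with hc
  set u : ℕ → α := fun x => S ((c + x) % n + 1) with hu
  set g := Nat.gcd n ρ with hgdef
  have hg1 : 1 ≤ g := Nat.gcd_pos_of_pos_left ρ (by omega)
  have hgρ : g ∣ ρ := Nat.gcd_dvd_right n ρ
  have hgn : g ∣ n := Nat.gcd_dvd_left n ρ
  have hgℓ : g ≤ ℓ := le_trans (Nat.le_of_dvd (by omega) hgρ) hρℓ
  set ρ' := ρ / g with hρ'def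
  have hρρ' : ρ = g * ρ' := (Nat.mul_div_cancel' hgρ).symm
  have humod : ∀ x, u (x % n) = u x := by
    intro x; simp only [hu]; rw [Nat.add_mod_mod]
  -- emptiness at τ₀ = n * ρ
  set T := hamIcc 1 (n*ρ) (frag n S i) (muExt n ℓ S i) with hT
  have hTb : (n:ℝ) / (γ * k) * T ≤ ((n*ρ : ℕ) : ℝ) := by
    by_contra hlt
    push_neg at hlt
    exact hne ⟨n*ρ, ⟨Nat.mul_pos (by omega) (by omega), hlt⟩⟩
  have hTγkρ : (T:ℝ) ≤ γ * k * ρ := by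
    have h3ℓ : (n:ℝ) / (γ * k) = 3 * ℓ := by
      rw [hn]; field_simp
    rw [h3ℓ] at hTb
    have hcast : ((n*ρ:ℕ):ℝ) = (n:ℝ) * ρ := by push_cast; ring
    rw [hcast, hn] at hTb
    have hℓ0 : (0:ℝ) < (ℓ:ℝ) := by exact_mod_cast hℓ1
    nlinarith
  -- pointwise descriptions
  have hfrag : ∀ j, 1 ≤ j → frag n S i j = u (j-1) := by
    intro j hj
    simp only [frag, cext, hu]
    have h : i + j - 1 - 1 = c + (j - 1) := by omega
    rw [h]
  have hmu : ∀ j, 1 ≤ j → muExt n ℓ S i j = u ((j-1) % ρ) := by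
    intro j hj
    simp only [muExt, cext, hu, ← hρdef]
    have h : i + (j-1) % ρ - 1 = c + (j - 1) % ρ := by omega
    rw [h]
  -- A1: T as count over range (n*ρ)
  have hA1 : T = ((Finset.range (n*ρ)).filter fun t => u t ≠ u (t % ρ)).card := by
    rw [hT]
    unfold hamIcc
    apply Finset.card_nbij' (i := fun j => j - 1) (j := fun t => t + 1)
    · intro j hj
      simp only [Finset.mem_coe, Finset.mem_filter, Finset.mem_Icc] at hj
      obtain ⟨⟨hj1, hj2⟩, hjp⟩ := hj
      rw [hfrag j hj1, hmu j hj1] at hjp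
      simp only [Finset.mem_coe, Finset.mem_filter, Finset.mem_range]
      exact ⟨by omega, hjp⟩
    · intro t ht
      simp only [Finset.mem_coe, Finset.mem_filter, Finset.mem_range] at ht
      simp only [Finset.mem_coe, Finset.mem_filter, Finset.mem_Icc]
      refine ⟨⟨by omega, by omega⟩, ?_⟩
      rw [hfrag (t+1) (by omega), hmu (t+1) (by omega)]
      simpa using ht.2
    · intro j hj
      simp only [Finset.mem_coe, Finset.mem_filter, Finset.mem_Icc] at hj
      dsimp only; omega
    · intro t ht
      dsimp only; omega
  -- A2: split as double sum
  set inr : ℕ → ℕ := fun x => ((Finset.range ρ).filter fun q => u x ≠ u ((x + q * n) % ρ)).card with hinner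
  have hA2 : ((Finset.range (n*ρ)).filter fun t => u t ≠ u (t % ρ)).card
      = ∑ x ∈ Finset.range n, inr x := by
    rw [Finset.card_filter]
    have hre : ∑ t ∈ Finset.range (n*ρ), (if u t ≠ u (t % ρ) then 1 else 0)
        = ∑ p ∈ Finset.range n ×ˢ Finset.range ρ,
            (if u p.1 ≠ u ((p.1 + p.2 * n) % ρ) then 1 else 0) := by
      apply Finset.sum_nbij' (i := fun t => (t % n, t / n)) (j := fun p => p.1 + p.2 * n)
      · intro t ht
        simp only [Finset.mem_range] at ht
        simp only [Finset.mem_product, Finset.mem_range]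
        exact ⟨Nat.mod_lt _ (by omega), Nat.div_lt_of_lt_mul (by omega)⟩
      · intro p hp
        simp only [Finset.mem_product, Finset.mem_range] at hp
        simp only [Finset.mem_range]
        calc p.1 + p.2 * n < n + p.2 * n := by omega
          _ = (p.2 + 1) * n := by ring
          _ ≤ ρ * n := Nat.mul_le_mul_right n (by omega)
          _ = n * ρ := Nat.mul_comm _ _
      · intro t ht
        show t % n + t / n * n = t
        exact Nat.mod_add_div' t n
      · intro p hp
        simp only [Finset.mem_product, Finset.mem_range] at hp
        show (_, _) = p
        have h1 : (p.1 + p.2 * n) % n = p.1 := by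
          rw [Nat.add_mul_mod_self_right, Nat.mod_eq_of_lt hp.1]
        have h2 : (p.1 + p.2 * n) / n = p.2 := by
          rw [Nat.add_mul_div_right _ _ (by omega : 0 < n), Nat.div_eq_of_lt hp.1]
          omega
        rw [h1, h2]
      · intro t ht
        show _ = ite _ _ _
        have h1 : t % n + t / n * n = t := Nat.mod_add_div' t n
        rw [h1, humod]
    rw [hre, Finset.sum_product]
    apply Finset.sum_congr rfl
    intro x hx
    simp only [hinner]
    rw [Finset.card_filter]
  -- A4: per-position inequality
  set N : ℕ → ℕ := fun x => ((Finset.range ρ).filter fun y => y % g = x % g ∧ u y = u x).card with hN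
  have hA4 : ∀ x, ρ ≤ inr x + g * N x := by
    intro x
    set C := (Finset.range ρ).filter (fun q => ¬ (u x ≠ u ((x + q * n) % ρ))) with hC
    have hsplit : inr x + C.card = ρ := by
      simp only [hinner, hC]
      rw [Finset.card_filter_add_card_filter_not]
      simp
    have himg : C.image (fun q => (x + q * n) % ρ)
        ⊆ (Finset.range ρ).filter (fun y => y % g = x % g ∧ u y = u x) := by
      intro y hy
      simp only [Finset.mem_image, hC, Finset.mem_filter, Finset.mem_range, not_not] at hy
      obtain ⟨q, ⟨hq, hequ⟩, rfl⟩ := hy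
      refine Finset.mem_filter.mpr ⟨Finset.mem_range.mpr (Nat.mod_lt _ (by omega)), ?_, hequ.symm⟩
      rw [Nat.mod_mod_of_dvd _ hgρ]
      obtain ⟨n', hn'⟩ := hgn
      rw [hn']
      have h : x + q * (g * n') = x + (q * n') * g := by ring
      rw [h, Nat.add_mul_mod_self_right]
    have hfib : C.card ≤ g * (C.image (fun q => (x + q * n) % ρ)).card := by
      apply Finset.card_le_mul_card_image
      intro y hy
      calc (C.filter fun q => (x + q * n) % ρ = y).card
          ≤ ((Finset.range ρ).filter fun q => (x + q * n) % ρ = y).card := by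
            apply Finset.card_le_card
            intro q hq
            simp only [hC, Finset.mem_filter, Finset.mem_range] at hq ⊢
            exact ⟨hq.1.1, hq.2⟩
        _ ≤ Nat.gcd n ρ := fiber_bound n ρ x y (by omega) (by omega)
    have himgc := Finset.card_le_card himg
    have : C.card ≤ g * N x := by
      calc C.card ≤ g * (C.image (fun q => (x + q * n) % ρ)).card := hfib
        _ ≤ g * N x := Nat.mul_le_mul_left g himgc
    omega
  -- classes
  set X : ℕ → Finset ℕ := fun r => (Finset.range n).filter (fun x => x % g = r) with hX
  set coset : ℕ → Finset ℕ := fun r => (Finset.range ρ).filter (fun y => y % g = r) with hcoset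
  set cnt : ℕ → α → ℕ := fun r col => ((X r).filter (fun x => u x = col)).card with hcnt
  have hXne : ∀ r, r < g → (X r).Nonempty := by
    intro r hr
    refine ⟨r, ?_⟩
    simp only [hX, Finset.mem_filter, Finset.mem_range]
    exact ⟨lt_of_lt_of_le hr (le_trans hgℓ hℓn), Nat.mod_eq_of_lt hr⟩
  have hbex : ∀ r, ∃ bb, r < g → (bb ∈ X r ∧ ∀ x ∈ X r, cnt r (u x) ≤ cnt r (u bb)) := by
    intro r
    by_cases hr : r < g
    · obtain ⟨bb, hb1, hb2⟩ := Finset.exists_max_image (X r) (fun x => cnt r (u x)) (hXne r hr)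
      exact ⟨bb, fun _ => ⟨hb1, hb2⟩⟩
    · exact ⟨0, fun h => absurd h hr⟩
  choose b hbspec using hbex
  set mism : ℕ → ℕ := fun r => ((X r).filter (fun x => u x ≠ u (b r))).card with hmism
  have hcosetcard : ∀ r, r < g → g * (coset r).card = ρ := by
    intro r hr
    have h := card_class g ρ' r hg1 hr
    rw [← hρρ'] at h
    simp only [hcoset]
    rw [h, ← hρρ']
  -- per-class inequality
  have hclass : ∀ r, r < g → ρ * mism r ≤ ∑ x ∈ X r, inr x := by
    intro r hr
    obtain ⟨hbm, hbmax⟩ := hbspec r hr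
    have hNx : ∀ x ∈ X r, N x = ∑ y ∈ coset r, (if u y = u x then 1 else 0) := by
      intro x hx
      simp only [hX, Finset.mem_filter, Finset.mem_range] at hx
      simp only [hN, hcoset, hx.2, ← Finset.filter_filter, Finset.card_filter]
    have hSN : ∑ x ∈ X r, N x ≤ (coset r).card * cnt r (u (b r)) := by
      calc ∑ x ∈ X r, N x = ∑ x ∈ X r, ∑ y ∈ coset r, (if u y = u x then 1 else 0) :=
            Finset.sum_congr rfl hNx
        _ = ∑ y ∈ coset r, ∑ x ∈ X r, (if u y = u x then 1 else 0) := Finset.sum_comm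
        _ = ∑ y ∈ coset r, cnt r (u y) := by
            apply Finset.sum_congr rfl
            intro y hy
            simp only [hcnt]
            rw [Finset.card_filter]
            apply Finset.sum_congr rfl
            intro x hx
            simp only [eq_comm]
        _ ≤ ∑ y ∈ coset r, cnt r (u (b r)) := by
            apply Finset.sum_le_sum
            intro y hy
            apply hbmax
            simp only [hcoset, Finset.mem_filter, Finset.mem_range] at hy
            simp only [hX, Finset.mem_filter, Finset.mem_range]
            exact ⟨lt_of_lt_of_le hy.1 hρn, hy.2⟩
        _ = (coset r).card * cnt r (u (b r)) := by rw [Finset.sum_const, smul_eq_mul]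
    have hsum4 : ρ * (X r).card ≤ (∑ x ∈ X r, inr x) + g * ∑ x ∈ X r, N x := by
      calc ρ * (X r).card = ∑ _x ∈ X r, ρ := by rw [Finset.sum_const, smul_eq_mul, Nat.mul_comm]
        _ ≤ ∑ x ∈ X r, (inr x + g * N x) := Finset.sum_le_sum (fun x _ => hA4 x)
        _ = (∑ x ∈ X r, inr x) + ∑ x ∈ X r, g * N x := Finset.sum_add_distrib
        _ = (∑ x ∈ X r, inr x) + g * ∑ x ∈ X r, N x := by rw [Finset.mul_sum]
    have hXsplit : (X r).card = cnt r (u (b r)) + mism r := by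
      simp only [hmism, hcnt, ne_eq]
      exact (Finset.card_filter_add_card_filter_not (p := fun x => u x = u (b r))).symm
    have h5 : g * ∑ x ∈ X r, N x ≤ ρ * cnt r (u (b r)) := by
      calc g * ∑ x ∈ X r, N x ≤ g * ((coset r).card * cnt r (u (b r))) :=
            Nat.mul_le_mul_left g hSN
        _ = (g * (coset r).card) * cnt r (u (b r)) := (Nat.mul_assoc _ _ _).symm
        _ = ρ * cnt r (u (b r)) := by rw [hcosetcard r hr]
    have h6 : ρ * mism r + ρ * cnt r (u (b r))
        ≤ (∑ x ∈ X r, inr x) + ρ * cnt r (u (b r)) := by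
      calc ρ * mism r + ρ * cnt r (u (b r)) = ρ * (X r).card := by rw [hXsplit]; ring
        _ ≤ (∑ x ∈ X r, inr x) + g * ∑ x ∈ X r, N x := hsum4
        _ ≤ (∑ x ∈ X r, inr x) + ρ * cnt r (u (b r)) := Nat.add_le_add_left h5 _
    exact Nat.le_of_add_le_add_right h6
  -- A8: global
  have hA8 : ρ * (∑ r ∈ Finset.range g, mism r) ≤ ∑ x ∈ Finset.range n, inr x := by
    have hfw : ∑ x ∈ Finset.range n, inr x
        = ∑ r ∈ Finset.range g, ∑ x ∈ (Finset.range n).filter (fun x => x % g = r), inr x :=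
      (Finset.sum_fiberwise_of_maps_to
        (fun x _ => Finset.mem_range.mpr (Nat.mod_lt _ (by omega))) inr).symm
    rw [hfw, Finset.mul_sum]
    apply Finset.sum_le_sum
    intro r hr
    exact hclass r (Finset.mem_range.mp hr)
  -- the base string
  set e := g - c % g with he
  set S' : ℕ → α := fun a => u (b ((a - 1 + e) % g)) with hS'
  have hkey : ∀ x, ((c + x) % n + e) % g = x % g := by
    intro x
    conv_lhs => rw [← Nat.mod_add_mod]
    rw [Nat.mod_mod_of_dvd _ hgn, Nat.mod_add_mod]
    exact modshift g c x hg1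
  -- ham equals sum of mismatches
  have hham : ham n S S' = ∑ r ∈ Finset.range g, mism r := by
    have h1 : ((Finset.Icc 1 n).filter (fun a => S a ≠ S' a)).card
        = ((Finset.range n).filter (fun x => u x ≠ u (b (x % g)))).card := by
      symm
      apply Finset.card_nbij (i := fun x => (c + x) % n + 1)
      · intro x hx
        simp only [Finset.mem_coe, Finset.mem_filter, Finset.mem_range] at hx
        simp only [Finset.mem_coe, Finset.mem_filter, Finset.mem_Icc]
        have hlt := Nat.mod_lt (c + x) (show 0 < n by omega)
        refine ⟨⟨by omega, by omega⟩, ?_⟩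
        have hSa : S ((c + x) % n + 1) = u x := rfl
        have hS'a : S' ((c + x) % n + 1) = u (b (x % g)) := by
          simp only [hS']
          rw [Nat.add_sub_cancel, hkey]
        rw [hSa, hS'a]
        exact hx.2
      · intro x hx x' hx' hxx
        simp only [Finset.coe_filter, Set.mem_setOf_eq, Finset.mem_range] at hx hx'
        dsimp only at hxx
        have h : (c + x) % n = (c + x') % n := by omega
        have e1 : ((c + x) % n + (n - c % n)) % n = x % n := by
          rw [Nat.mod_add_mod]; exact modshift n c x (by omega)
        have e2 : ((c + x') % n + (n - c % n)) % n = x' % n := by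
          rw [Nat.mod_add_mod]; exact modshift n c x' (by omega)
        rw [h] at e1
        rw [e2] at e1
        rw [Nat.mod_eq_of_lt hx.1, Nat.mod_eq_of_lt hx'.1] at e1
        omega
      · intro a ha
        simp only [Finset.coe_filter, Set.mem_setOf_eq, Finset.mem_Icc] at ha
        obtain ⟨⟨ha1, ha2⟩, hap⟩ := ha
        refine ⟨(a - 1 + (n - c % n)) % n, ?_, ?_⟩
        · have hφ : (c + ((a - 1 + (n - c % n)) % n)) % n + 1 = a := by
            rw [Nat.add_mod_mod]
            have h : c + (a - 1 + (n - c % n)) = c + (a-1) + (n - c % n) := by omega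
            rw [h, modshift n c (a-1) (by omega), Nat.mod_eq_of_lt (by omega)]
            omega
          simp only [Finset.mem_coe, Finset.mem_filter, Finset.mem_range]
          refine ⟨Nat.mod_lt _ (by omega), ?_⟩
          have hSa : S a = u ((a - 1 + (n - c % n)) % n) := by
            conv_lhs => rw [← hφ]
          have hS'a : S' a = u (b (((a - 1 + (n - c % n)) % n) % g)) := by
            conv_lhs => rw [← hφ]
            simp only [hS']
            rw [Nat.add_sub_cancel, hkey]
          rw [← hSa, ← hS'a]
          exact hap
        · show (c + ((a - 1 + (n - c % n)) % n)) % n + 1 = a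
          rw [Nat.add_mod_mod]
          have h : c + (a - 1 + (n - c % n)) = c + (a-1) + (n - c % n) := by omega
          rw [h, modshift n c (a-1) (by omega), Nat.mod_eq_of_lt (by omega)]
          omega
    unfold ham hamIcc
    rw [h1, Finset.card_filter]
    rw [← Finset.sum_fiberwise_of_maps_to (g := fun x => x % g) (t := Finset.range g)
      (fun x _ => Finset.mem_range.mpr (Nat.mod_lt _ (by omega)))]
    apply Finset.sum_congr rfl
    intro r hr
    simp only [hmism]
    rw [Finset.card_filter]
    apply Finset.sum_congr
    · rfl
    · intro x hx
      simp only [hX, Finset.mem_filter, Finset.mem_range] at hx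
      rw [hx.2]
  -- root bound
  have hroot : root n S' ≤ g := by
    apply Nat.sInf_le
    refine ⟨hgn, hg1, ?_⟩
    intro j hj hjn
    show u (b ((j - 1 + e) % g)) = u (b ((j + g - 1 + e) % g))
    have h : j + g - 1 + e = (j - 1 + e) + g := by omega
    rw [h, Nat.add_mod_right]
  -- conclude
  apply hS
  refine ⟨S', ?_, ?_⟩
  · have h1 : root n S' ≤ ℓ := le_trans hroot hgℓ
    have h2 : ((root n S' : ℕ) : ℝ) ≤ (ℓ:ℝ) := by exact_mod_cast h1
    have hℓeq : (ℓ:ℝ) = (n:ℝ) / (3 * γ * k) := by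
      rw [hn]; field_simp
    linarith [hℓeq ▸ h2]
  · rw [hham]
    have hρD : (ρ:ℝ) * ((∑ r ∈ Finset.range g, mism r : ℕ) : ℝ) ≤ (T:ℝ) := by
      have hnat : ρ * (∑ r ∈ Finset.range g, mism r) ≤ T := by
        rw [hA1, hA2]; exact hA8
      exact_mod_cast hnat
    have hρR : (0:ℝ) < (ρ:ℝ) := by exact_mod_cast hρ1
    nlinarith [hTγkρ]

lemma mem_cubicSet {n ℓ : ℕ} {S : ℕ → α} {i : ℕ} (h : i ∈ cubicSet n ℓ S) :
    1 ≤ i ∧ i ≤ n ∧ rho n ℓ S i ≤ ℓ := by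
  simp only [cubicSet, Finset.mem_filter, Finset.mem_Icc] at h
  exact ⟨h.1.1, h.1.2, h.2⟩

lemma Mset_card (n k ℓ : ℕ) (γ : ℝ) (S : ℕ → α) (i : ℕ) (hi1 : 1 ≤ i) :
    (Mset n ℓ k γ S i).card
      = hamIcc 1 (tau n ℓ k γ S i) (frag n S i) (muExt n ℓ S i) := by
  set τ := tau n ℓ k γ S i with hτ
  unfold Mset Rset hamIcc
  rw [← hτ]
  apply Finset.card_nbij' (i := fun j => j - i + 1) (j := fun j' => j' + i - 1)
  · intro j hj
    simp only [Finset.mem_coe, Finset.mem_filter, Finset.mem_Icc] at hj ⊢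
    obtain ⟨⟨h1, h2⟩, h3⟩ := hj
    refine ⟨⟨by omega, by omega⟩, ?_⟩
    have hfr : frag n S i (j - i + 1) = cext n S j := by
      simp only [frag]
      have h : i + (j - i + 1) - 1 = j := by omega
      rw [h]
    rw [hfr]
    exact h3
  · intro j' hj'
    simp only [Finset.mem_coe, Finset.mem_filter, Finset.mem_Icc] at hj' ⊢
    obtain ⟨⟨h1, h2⟩, h3⟩ := hj'
    have hfr : frag n S i j' = cext n S (j' + i - 1) := by
      simp only [frag]
      have h : i + j' - 1 = j' + i - 1 := by omega
      rw [h]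
    rw [hfr] at h3
    have h4 : j' + i - 1 - i + 1 = j' := by omega
    rw [h4]
    exact ⟨⟨by omega, by omega⟩, h3⟩
  · intro j hj
    simp only [Finset.mem_coe, Finset.mem_filter, Finset.mem_Icc] at hj
    dsimp only; omega
  · intro j' hj'
    simp only [Finset.mem_coe, Finset.mem_filter, Finset.mem_Icc] at hj'
    dsimp only; omega

lemma tau_spec (n k ℓ : ℕ) (γ : ℝ) (S : ℕ → α)
    (hk1 : 1 ≤ k) (hγ : 14 ≤ γ) (hℓ1 : 1 ≤ ℓ) (hn : (n : ℝ) = 3 * γ * k * ℓ)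
    (hS : ¬ PseudoPeriodic n (3 * γ * k) (γ * k) S)
    (i : ℕ) (hi : i ∈ cubicSet n ℓ S) :
    1 ≤ tau n ℓ k γ S i ∧
      ((tau n ℓ k γ S i : ℝ) < 3 * ℓ * ((Mset n ℓ k γ S i).card : ℝ)) := by
  obtain ⟨hi1, hin, hρ⟩ := mem_cubicSet hi
  have hne := tauSet_nonempty n k ℓ γ S hk1 hγ hℓ1 hn hS i hi1 hρ
  have hmem := Nat.sInf_mem hne
  obtain ⟨h1, h2⟩ := hmem
  refine ⟨h1, ?_⟩
  have hγ0 : (0:ℝ) < γ := by linarith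
  have hk0 : (0:ℝ) < (k:ℝ) := by exact_mod_cast hk1
  have hγk : (0:ℝ) < γ * k := mul_pos hγ0 hk0
  have h3ℓ : (n:ℝ) / (γ * k) = 3 * ℓ := by rw [hn]; field_simp
  rw [Mset_card n k ℓ γ S i hi1]
  rw [← h3ℓ]
  exact h2

lemma greedy (n k ℓ : ℕ) (γ : ℝ) (S : ℕ → α)
    (htau : ∀ i ∈ cubicSet n ℓ S,
      1 ≤ tau n ℓ k γ S i ∧ tau n ℓ k γ S i < 3 * ℓ * (Mset n ℓ k γ S i).card) :
    ∀ m (P' : Finset ℕ), P'.card ≤ m → P' ⊆ cubicSet n ℓ S →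
      ∃ F : Finset ℕ, (∀ j ∈ F, ∃ i ∈ P', j ∈ Mset n ℓ k γ S i) ∧
        P'.card ≤ 3 * ℓ * F.card := by
  intro m
  induction m with
  | zero =>
    intro P' hc _
    exact ⟨∅, by simp, by simpa using hc⟩
  | succ m ih =>
    intro P' hc hsub
    rcases P'.eq_empty_or_nonempty with rfl | hne
    · exact ⟨∅, by simp, by simp⟩
    set i₁ := P'.min' hne with hi₁
    have hi₁P : i₁ ∈ P' := P'.min'_mem hne
    obtain ⟨hτ1, hτM⟩ := htau i₁ (hsub hi₁P)
    set τ₁ := tau n ℓ k γ S i₁ with hτ₁def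
    set P'' := P'.filter (fun i => i₁ + τ₁ ≤ i) with hP''
    have hP''sub : P'' ⊆ P' := Finset.filter_subset _ _
    have hP''card : P''.card ≤ m := by
      have h1 : i₁ ∉ P'' := by
        simp only [hP'', Finset.mem_filter]
        rintro ⟨-, h⟩
        omega
      have h2 : P'' ⊆ P'.erase i₁ := by
        intro x hx
        refine Finset.mem_erase.mpr ⟨?_, hP''sub hx⟩
        intro heq
        exact h1 (heq ▸ hx)
      calc P''.card ≤ (P'.erase i₁).card := Finset.card_le_card h2
        _ = P'.card - 1 := Finset.card_erase_of_mem hi₁P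
        _ ≤ m := by omega
    obtain ⟨F'', hF''1, hF''2⟩ := ih P'' hP''card (hP''sub.trans hsub)
    refine ⟨Mset n ℓ k γ S i₁ ∪ F'', ?_, ?_⟩
    · intro j hj
      rcases Finset.mem_union.mp hj with h | h
      · exact ⟨i₁, hi₁P, h⟩
      · obtain ⟨i, hiP'', hiM⟩ := hF''1 j h
        exact ⟨i, hP''sub hiP'', hiM⟩
    · have hdisj : Disjoint (Mset n ℓ k γ S i₁) F'' := by
        rw [Finset.disjoint_left]
        intro j hj hj'
        obtain ⟨i, hiP'', hiM⟩ := hF''1 j hj'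
        have hij : i₁ + τ₁ ≤ i := (Finset.mem_filter.mp hiP'').2
        have h1 : j ≤ i₁ + τ₁ - 1 := by
          have := (Finset.mem_Icc.mp (Finset.mem_filter.mp hj).1).2
          omega
        have h2 : i ≤ j := (Finset.mem_Icc.mp (Finset.mem_filter.mp hiM).1).1
        omega
      have hcu : (Mset n ℓ k γ S i₁ ∪ F'').card = (Mset n ℓ k γ S i₁).card + F''.card :=
        Finset.card_union_of_disjoint hdisj
      have hsplit : P'.card ≤ τ₁ + P''.card := by
        have hsd : P' \ P'' ⊆ Finset.Icc i₁ (i₁ + τ₁ - 1) := by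
          intro x hx
          obtain ⟨hxP, hxn⟩ := Finset.mem_sdiff.mp hx
          simp only [hP'', Finset.mem_filter] at hxn
          have hmin := P'.min'_le x hxP
          simp only [Finset.mem_Icc]
          constructor
          · exact hmin
          · by_contra hcon
            exact hxn ⟨hxP, by omega⟩
        have h1 : (P' \ P'').card ≤ τ₁ := by
          calc (P' \ P'').card ≤ (Finset.Icc i₁ (i₁ + τ₁ - 1)).card :=
                Finset.card_le_card hsd
            _ = i₁ + τ₁ - 1 + 1 - i₁ := Nat.card_Icc _ _
            _ ≤ τ₁ := by omega
        have h2 : (P' \ P'').card + P''.card = P'.card := by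
          rw [Finset.card_sdiff_add_card_eq_card hP''sub]
        omega
      have hmul : 3 * ℓ * ((Mset n ℓ k γ S i₁).card + F''.card)
          = 3 * ℓ * (Mset n ℓ k γ S i₁).card + 3 * ℓ * F''.card := Nat.mul_add _ _ _
      rw [hcu]
      omega


set_option maxHeartbeats 1600000 in
/-- For every `S ∈ Σ^n \ H_{n,k}`, `|f_c(S)| ≥ (γk/(3n))·|P(S)|`. -/
theorem stmt11 {α : Type*} (n k ℓ : ℕ) (γ : ℝ)
    (hk1 : 1 ≤ k) (hkn : k ≤ n) (hγ : 14 ≤ γ) (hℓ1 : 1 ≤ ℓ)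
    (hn : (n : ℝ) = 3 * γ * k * ℓ)
    (S : ℕ → α) (hS : ¬ PseudoPeriodic n (3 * γ * k) (γ * k) S) :
    γ * k / (3 * n) * ((cubicSet n ℓ S).card : ℝ) ≤ ((fc n ℓ k γ S).card : ℝ) := by
  classical
  have hγ0 : (0:ℝ) < γ := by linarith
  have hk0 : (0:ℝ) < (k:ℝ) := by exact_mod_cast hk1
  have hγk : (0:ℝ) < γ * k := mul_pos hγ0 hk0
  have hℓ0 : (0:ℝ) < (ℓ:ℝ) := by exact_mod_cast hℓ1
  have hℓn : ℓ ≤ n := by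
    have h : (ℓ:ℝ) ≤ (n:ℝ) := by
      rw [hn]
      have hℓ0' : (0:ℝ) ≤ (ℓ:ℝ) := Nat.cast_nonneg _
      have hk1' : (1:ℝ) ≤ (k:ℝ) := by exact_mod_cast hk1
      have h41 : (1:ℝ) ≤ 3 * γ * k := by nlinarith
      have h42 := mul_le_mul_of_nonneg_right h41 hℓ0'
      linarith
    exact_mod_cast h
  have hn1 : 1 ≤ n := le_trans hℓ1 hℓn
  have hn0 : (0:ℝ) < (n:ℝ) := by exact_mod_cast hn1
  have htau := fun i hi => tau_spec n k ℓ γ S hk1 hγ hℓ1 hn hS i hi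
  have hPn : ((cubicSet n ℓ S).card) ≤ n := by
    calc (cubicSet n ℓ S).card ≤ (Finset.Icc 1 n).card :=
          Finset.card_le_card (Finset.filter_subset _ _)
      _ = n := by rw [Nat.card_Icc]; omega
  by_cases hbig : ∃ i ∈ cubicSet n ℓ S, n < tau n ℓ k γ S i
  · -- Case 1: a long tau exists; its mismatch set alone is large
    obtain ⟨i, hicub, hτn⟩ := hbig
    obtain ⟨hτ1, hτM⟩ := htau i hicub
    set τ := tau n ℓ k γ S i with hτdef
    set M := Mset n ℓ k γ S i with hMdef
    set W := M.image (fun j : ℕ => zwrap n (j:ℤ)) with hWdef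
    have hWfc : W ⊆ fc n ℓ k γ S := by
      intro x hx
      obtain ⟨j, hjM, rfl⟩ := Finset.mem_image.mp hx
      unfold fc
      apply Finset.mem_biUnion.mpr
      refine ⟨i, hicub, ?_⟩
      simp only [pure_def, bind_def, Finset.sup_singleton_apply, Finset.mem_image,
        exists_exists_and_eq_and]
      exact ⟨j, hjM, rfl⟩
    have hi1 : 1 ≤ i := (mem_cubicSet hicub).1
    have hfib : M.card ≤ ((τ-1) / n + 1) * W.card := by
      rw [hWdef]
      apply Finset.card_le_mul_card_image
      intro x hx
      calc (M.filter fun j : ℕ => zwrap n (j:ℤ) = x).card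
          ≤ ((Finset.Icc i (i + τ - 1)).filter fun j : ℕ => zwrap n (j:ℤ) = x).card := by
            apply Finset.card_le_card
            intro j hj
            have hj' := Finset.mem_filter.mp hj
            exact Finset.mem_filter.mpr ⟨(Finset.mem_filter.mp hj'.1).1, hj'.2⟩
        _ ≤ (τ-1) / n + 1 := zwrap_fiber_le n i τ x hi1
    have hQ : (((τ-1) / n + 1 : ℕ):ℝ) ≤ 2 * τ / n := by
      have h1 : (((τ-1) / n : ℕ):ℝ) ≤ ((τ-1:ℕ):ℝ)/(n:ℝ) := Nat.cast_div_le
      have hτc : ((τ-1:ℕ):ℝ) = (τ:ℝ) - 1 := by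
        push_cast [Nat.cast_sub hτ1]
        ring
      have h2 : (1:ℝ) ≤ (τ:ℝ)/(n:ℝ) := by
        rw [le_div_iff₀ hn0]
        have : (n:ℝ) ≤ (τ:ℝ) := by exact_mod_cast le_of_lt hτn
        linarith
      have h3 : ((τ:ℝ) - 1)/n + 1 ≤ 2*τ/n := by
        have e1 : ((τ:ℝ)-1)/n = τ/n - 1/n := by ring
        have e2 : 2*(τ:ℝ)/n = τ/n + τ/n := by ring
        have e3 : (0:ℝ) ≤ 1/n := by positivity
        linarith
      rw [hτc] at h1
      push_cast
      linarith
    have hMr : (M.card:ℝ) ≤ (((τ-1) / n + 1 : ℕ):ℝ) * (W.card:ℝ) := by exact_mod_cast hfib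
    have hW0 : (0:ℝ) ≤ (W.card:ℝ) := Nat.cast_nonneg _
    have hτ0 : (0:ℝ) < (τ:ℝ) := by exact_mod_cast hτ1
    have hchain : (τ:ℝ) < 3 * ℓ * (2 * τ / n) * W.card := by
      calc (τ:ℝ) < 3 * ℓ * M.card := hτM
        _ ≤ 3 * ℓ * ((((τ-1) / n + 1 : ℕ):ℝ) * W.card) := by
            apply mul_le_mul_of_nonneg_left hMr (by positivity)
        _ ≤ 3 * ℓ * ((2 * τ / n) * W.card) := by
            apply mul_le_mul_of_nonneg_left (mul_le_mul_of_nonneg_right hQ hW0) (by positivity)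
        _ = 3 * ℓ * (2 * τ / n) * W.card := by ring
    have hstep : (τ:ℝ) * n < 6 * ℓ * W.card * τ := by
      have h := mul_lt_mul_of_pos_right hchain hn0
      calc (τ:ℝ) * n < 3 * ℓ * (2 * τ / n) * W.card * n := h
        _ = 6 * ℓ * W.card * τ := by field_simp; ring
    have hnW : (n:ℝ) < 6 * ℓ * W.card := by
      by_contra hcon
      push_neg at hcon
      have h2 := mul_le_mul_of_nonneg_right hcon (le_of_lt hτ0)
      nlinarith
    have hfcW : (W.card:ℝ) ≤ ((fc n ℓ k γ S).card:ℝ) := by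
      exact_mod_cast Finset.card_le_card hWfc
    have hP : ((cubicSet n ℓ S).card : ℝ) ≤ (n:ℝ) := by exact_mod_cast hPn
    have hL : γ * k / (3 * n) * ((cubicSet n ℓ S).card : ℝ) ≤ γ * k / 3 := by
      have h1 : γ * k / (3 * n) * ((cubicSet n ℓ S).card : ℝ) ≤ γ * k / (3 * n) * n := by
        apply mul_le_mul_of_nonneg_left hP (by positivity)
      have h2 : γ * k / (3 * n) * (n:ℝ) = γ * k / 3 := by
        field_simp
        skip
      linarith
    have hW2 : γ * k / 2 < (W.card:ℝ) := by
      rw [hn] at hnW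
      by_contra hcon
      push_neg at hcon
      have h1 : 6 * (ℓ:ℝ) * W.card ≤ 6 * ℓ * (γ*k/2) := by
        apply mul_le_mul_of_nonneg_left hcon (by positivity)
      nlinarith
    linarith
  · -- Case 2: all taus are short; greedy covering
    push_neg at hbig
    have htauN : ∀ i ∈ cubicSet n ℓ S,
        1 ≤ tau n ℓ k γ S i ∧ tau n ℓ k γ S i < 3 * ℓ * (Mset n ℓ k γ S i).card := by
      intro i hi
      obtain ⟨h1, h2⟩ := htau i hi
      refine ⟨h1, ?_⟩
      have : ((tau n ℓ k γ S i : ℕ):ℝ) < ((3 * ℓ * (Mset n ℓ k γ S i).card : ℕ):ℝ) := by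
        push_cast
        exact h2
      exact_mod_cast this
    obtain ⟨F, hF1, hF2⟩ := greedy n k ℓ γ S htauN (cubicSet n ℓ S).card (cubicSet n ℓ S)
      le_rfl (Finset.Subset.refl _)
    set W := F.image (fun j : ℕ => zwrap n (j:ℤ)) with hWdef
    have hWfc : W ⊆ fc n ℓ k γ S := by
      intro x hx
      obtain ⟨j, hjF, rfl⟩ := Finset.mem_image.mp hx
      obtain ⟨i, hicub, hjM⟩ := hF1 j hjF
      unfold fc
      apply Finset.mem_biUnion.mpr
      refine ⟨i, hicub, ?_⟩
      simp only [pure_def, bind_def, Finset.sup_singleton_apply, Finset.mem_image,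
        exists_exists_and_eq_and]
      exact ⟨j, hjM, rfl⟩
    have hFIcc : F ⊆ Finset.Icc 1 (2*n) := by
      intro j hj
      obtain ⟨i, hicub, hjM⟩ := hF1 j hj
      have hi1 : 1 ≤ i := (mem_cubicSet hicub).1
      have hin : i ≤ n := (mem_cubicSet hicub).2.1
      have hτn := hbig i hicub
      have hjR := Finset.mem_Icc.mp (Finset.mem_filter.mp hjM).1
      simp only [Finset.mem_Icc]
      omega
    have hfibF : F.card ≤ 2 * W.card := by
      rw [hWdef]
      apply Finset.card_le_mul_card_image
      intro x hx
      have h2n : (2*n - 1)/n + 1 = 2 := by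
        have : (2*n - 1)/n = 1 := by
          apply Nat.div_eq_of_lt_le
          · omega
          · omega
        omega
      calc (F.filter fun j : ℕ => zwrap n (j:ℤ) = x).card
          ≤ ((Finset.Icc 1 (1 + (2*n) - 1)).filter fun j : ℕ => zwrap n (j:ℤ) = x).card := by
            apply Finset.card_le_card
            intro j hj
            have hj' := Finset.mem_filter.mp hj
            have := Finset.mem_Icc.mp (hFIcc hj'.1)
            exact Finset.mem_filter.mpr ⟨Finset.mem_Icc.mpr (by omega), hj'.2⟩
        _ ≤ (2*n - 1) / n + 1 := zwrap_fiber_le n 1 (2*n) x le_rfl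
        _ ≤ 2 := by omega
    have hPF : (cubicSet n ℓ S).card ≤ 6 * ℓ * W.card := by
      calc (cubicSet n ℓ S).card ≤ 3 * ℓ * F.card := hF2
        _ ≤ 3 * ℓ * (2 * W.card) := Nat.mul_le_mul_left _ hfibF
        _ = 6 * ℓ * W.card := by ring
    have hWfc' : W.card ≤ (fc n ℓ k γ S).card := Finset.card_le_card hWfc
    have hPfc : (cubicSet n ℓ S).card ≤ 6 * ℓ * (fc n ℓ k γ S).card := by
      calc (cubicSet n ℓ S).card ≤ 6 * ℓ * W.card := hPF
        _ ≤ 6 * ℓ * (fc n ℓ k γ S).card := Nat.mul_le_mul_left _ hWfc'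
    have hco : γ * k / (3 * (n:ℝ)) = 1 / (9 * ℓ) := by
      rw [hn]; field_simp; ring
    rw [hco]
    have hcast : ((cubicSet n ℓ S).card : ℝ) ≤ 6 * ℓ * ((fc n ℓ k γ S).card : ℝ) := by
      exact_mod_cast hPfc
    have hfc0 : (0:ℝ) ≤ ((fc n ℓ k γ S).card : ℝ) := Nat.cast_nonneg _
    rw [div_mul_eq_mul_div, div_le_iff₀ (by positivity : (0:ℝ) < 9 * ℓ)]
    nlinarith [mul_nonneg (le_of_lt hℓ0) hfc0]
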